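/- Let v₁, v₂ ∈ ℤ⁴ be such that (v₁, v₂) is a ℤ-basis of the lattice (ℚ·v₁ + ℚ·v₂) ∩ ℤ⁴. Then the associated points a₁ = a₁(v₁,v₂) and a₂ = a₂(v₁,v₂) lie in ℤ⁴, satisfy a₁ ≡ a₂ mod 2 coordinatewise, and the pair (a₁, a₂) is pair-primitive. -/

import Mathlib

open Quaternion

/-- A quaternion over `ℚ` has integer coordinates, i.e. lies in `ℤ⁴`. -/
def IsIntegerQuat (x : ℍ[ℚ]) : Prop :=
  ∃ a b c d : ℤ, x.re = a ∧ x.imI = b ∧ x.imJ = c ∧ x.imK = d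

/-- `(v₁, v₂)` is a `ℤ`-basis of the lattice `L ∩ ℤ⁴`. -/
def IsZBasisQuat (L : Submodule ℚ ℍ[ℚ]) (v₁ v₂ : ℍ[ℚ]) : Prop :=
  v₁ ∈ L ∧ v₂ ∈ L ∧ IsIntegerQuat v₁ ∧ IsIntegerQuat v₂ ∧ LinearIndependent ℚ ![v₁, v₂] ∧
    ∀ x ∈ L, IsIntegerQuat x → ∃ m n : ℤ, x = (m : ℚ) • v₁ + (n : ℚ) • v₂

/-- A pair of integer vectors `(w₁, w₂)` is *pair-primitive*: no odd prime divides all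
coordinates of both `w₁` and `w₂`, and it is not the case that `4` divides all coordinates
of `w₁ + w₂` and all coordinates of `w₁ - w₂`. -/
def PairPrimitive (w₁ w₂ : ℍ[ℚ]) : Prop :=
  (∀ p : ℕ, p.Prime → p ≠ 2 →
      ¬(IsIntegerQuat ((p : ℚ)⁻¹ • w₁) ∧ IsIntegerQuat ((p : ℚ)⁻¹ • w₂))) ∧
    ¬(IsIntegerQuat ((4 : ℚ)⁻¹ • (w₁ + w₂)) ∧ IsIntegerQuat ((4 : ℚ)⁻¹ • (w₁ - w₂)))

/-- Core linear-dependence lemma over a field: if `y₀u - x₀w = 0` and `u × w = 0`,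
then `(x₀, u)` and `(y₀, w)` are linearly dependent. -/
lemma core_dep {F : Type*} [Field F] (x0 u1 u2 u3 y0 w1 w2 w3 : F)
    (h1 : y0*u1 - x0*w1 = 0) (h2 : y0*u2 - x0*w2 = 0) (h3 : y0*u3 - x0*w3 = 0)
    (c1 : u2*w3 - u3*w2 = 0) (c2 : u3*w1 - u1*w3 = 0) (c3 : u1*w2 - u2*w1 = 0) :
    ∃ a b : F, (a ≠ 0 ∨ b ≠ 0) ∧ a*x0 + b*y0 = 0 ∧ a*u1 + b*w1 = 0 ∧
      a*u2 + b*w2 = 0 ∧ a*u3 + b*w3 = 0 := by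
  by_cases k1 : u1 ≠ 0 ∨ w1 ≠ 0
  · refine ⟨w1, -u1, ?_, by linear_combination -h1, by ring,
      by linear_combination -c3, by linear_combination c2⟩
    rcases k1 with h | h
    · exact Or.inr (by simpa using h)
    · exact Or.inl h
  by_cases k2 : u2 ≠ 0 ∨ w2 ≠ 0
  · refine ⟨w2, -u2, ?_, by linear_combination -h2, by linear_combination c3,
      by ring, by linear_combination -c1⟩
    rcases k2 with h | h
    · exact Or.inr (by simpa using h)
    · exact Or.inl h
  by_cases k3 : u3 ≠ 0 ∨ w3 ≠ 0
  · refine ⟨w3, -u3, ?_, by linear_combination -h3, by linear_combination -c2,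
      by linear_combination c1, by ring⟩
    rcases k3 with h | h
    · exact Or.inr (by simpa using h)
    · exact Or.inl h
  push_neg at k1 k2 k3
  obtain ⟨e1, f1⟩ := k1; obtain ⟨e2, f2⟩ := k2; obtain ⟨e3, f3⟩ := k3
  by_cases hx : x0 = 0
  · exact ⟨1, 0, Or.inl one_ne_zero, by simp [hx], by simp [e1], by simp [e2], by simp [e3]⟩
  · exact ⟨y0, -x0, Or.inr (neg_ne_zero.mpr hx), by ring,
      by simp [e1, f1], by simp [e2, f2], by simp [e3, f3]⟩

lemma indep2 {v₁ v₂ : ℍ[ℚ]} (hli : LinearIndependent ℚ ![v₁, v₂]) {a b : ℚ}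
    (h : a • v₁ + b • v₂ = 0) : a = 0 ∧ b = 0 := by
  have := Fintype.linearIndependent_iff.mp hli ![a, b] (by simpa [Fin.sum_univ_two] using h)
  exact ⟨this 0, this 1⟩

/-- If `(c/N)•v₁ + (d/N)•v₂` is integral then `N ∣ c` and `N ∣ d`. -/
lemma key_div {v₁ v₂ : ℍ[ℚ]} (hli : LinearIndependent ℚ ![v₁, v₂])
    (hlat : ∀ x ∈ Submodule.span ℚ ({v₁, v₂} : Set ℍ[ℚ]), IsIntegerQuat x →
      ∃ m n : ℤ, x = (m : ℚ) • v₁ + (n : ℚ) • v₂)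
    (N c d : ℤ) (hN : N ≠ 0)
    (hint : IsIntegerQuat ((N : ℚ)⁻¹ • ((c : ℚ) • v₁ + (d : ℚ) • v₂))) :
    N ∣ c ∧ N ∣ d := by
  have hNQ : (N : ℚ) ≠ 0 := Int.cast_ne_zero.mpr hN
  set x := (N : ℚ)⁻¹ • ((c : ℚ) • v₁ + (d : ℚ) • v₂) with hxdef
  have hmem : x ∈ Submodule.span ℚ ({v₁, v₂} : Set ℍ[ℚ]) := by
    rw [Submodule.mem_span_pair]
    exact ⟨(N:ℚ)⁻¹ * c, (N:ℚ)⁻¹ * d, by rw [hxdef]; rw [smul_add, smul_smul, smul_smul]⟩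
  obtain ⟨m, n, hmn⟩ := hlat x hmem hint
  have h0 : ((N:ℚ)⁻¹ * c - m) • v₁ + ((N:ℚ)⁻¹ * d - n) • v₂ = 0 := by
    rw [sub_smul, sub_smul]
    have hx2 : x = (N:ℚ)⁻¹ • ((c : ℚ) • v₁ + (d : ℚ) • v₂) := hxdef
    rw [hmn] at hx2
    rw [smul_add, smul_smul, smul_smul] at hx2
    linear_combination (norm := module) -hx2
  obtain ⟨ha, hb⟩ := indep2 hli h0
  constructor
  · refine ⟨m, ?_⟩
    have : (c : ℚ) = N * m := by field_simp at ha; linarith [ha]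
    exact_mod_cast this
  · refine ⟨n, ?_⟩
    have : (d : ℚ) = N * n := by field_simp at hb; linarith [hb]
    exact_mod_cast this

/-- There is no nontrivial mod-`p` linear dependence between the coordinates of a
`ℤ`-basis pair. -/
lemma no_dep {v₁ v₂ : ℍ[ℚ]} (hli : LinearIndependent ℚ ![v₁, v₂])
    (hlat : ∀ x ∈ Submodule.span ℚ ({v₁, v₂} : Set ℍ[ℚ]), IsIntegerQuat x →
      ∃ m n : ℤ, x = (m : ℚ) • v₁ + (n : ℚ) • v₂)
    (p0 p1 p2 p3 q0 q1 q2 q3 : ℤ)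
    (e0 : v₁.re = (p0:ℚ)) (e1 : v₁.imI = (p1:ℚ)) (e2 : v₁.imJ = (p2:ℚ)) (e3 : v₁.imK = (p3:ℚ))
    (f0 : v₂.re = (q0:ℚ)) (f1 : v₂.imI = (q1:ℚ)) (f2 : v₂.imJ = (q2:ℚ)) (f3 : v₂.imK = (q3:ℚ))
    (p : ℕ) (hp : p.Prime) (a b : ZMod p) (hab : a ≠ 0 ∨ b ≠ 0)
    (g0 : a * (p0 : ZMod p) + b * (q0 : ZMod p) = 0)
    (g1 : a * (p1 : ZMod p) + b * (q1 : ZMod p) = 0)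
    (g2 : a * (p2 : ZMod p) + b * (q2 : ZMod p) = 0)
    (g3 : a * (p3 : ZMod p) + b * (q3 : ZMod p) = 0) : False := by
  haveI : Fact p.Prime := ⟨hp⟩
  set A : ℤ := (a.val : ℤ) with hA
  set B : ℤ := (b.val : ℤ) with hB
  have castA : ((A : ℤ) : ZMod p) = a := by
    simp [hA, ZMod.natCast_val, ZMod.cast_id]
  have castB : ((B : ℤ) : ZMod p) = b := by
    simp [hB, ZMod.natCast_val, ZMod.cast_id]
  have hdvd : ∀ (c d : ℤ), a * (c : ZMod p) + b * (d : ZMod p) = 0 → (p:ℤ) ∣ A * c + B * d := by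
    intro c d h
    rw [← ZMod.intCast_zmod_eq_zero_iff_dvd]
    push_cast
    rw [castA, castB]
    exact h
  have d0 := hdvd _ _ g0
  have d1 := hdvd _ _ g1
  have d2 := hdvd _ _ g2
  have d3 := hdvd _ _ g3
  have hpQ : (p : ℚ) ≠ 0 := by exact_mod_cast hp.ne_zero
  have hint : IsIntegerQuat (((p:ℤ) : ℚ)⁻¹ • ((A : ℚ) • v₁ + (B : ℚ) • v₂)) := by
    obtain ⟨k0, hk0⟩ := d0; obtain ⟨k1, hk1⟩ := d1
    obtain ⟨k2, hk2⟩ := d2; obtain ⟨k3, hk3⟩ := d3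
    refine ⟨k0, k1, k2, k3, ?_, ?_, ?_, ?_⟩ <;>
      simp only [Quaternion.re_smul, Quaternion.imI_smul, Quaternion.imJ_smul,
        Quaternion.imK_smul, Quaternion.re_add, Quaternion.imI_add, Quaternion.imJ_add,
        Quaternion.imK_add, e0, e1, e2, e3, f0, f1, f2, f3, smul_eq_mul]
    · have : (A:ℚ) * p0 + B * q0 = p * k0 := by exact_mod_cast congrArg (Int.cast : ℤ → ℚ) hk0
      push_cast
      field_simp
      linarith [this]
    · have : (A:ℚ) * p1 + B * q1 = p * k1 := by exact_mod_cast congrArg (Int.cast : ℤ → ℚ) hk1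
      push_cast
      field_simp
      linarith [this]
    · have : (A:ℚ) * p2 + B * q2 = p * k2 := by exact_mod_cast congrArg (Int.cast : ℤ → ℚ) hk2
      push_cast
      field_simp
      linarith [this]
    · have : (A:ℚ) * p3 + B * q3 = p * k3 := by exact_mod_cast congrArg (Int.cast : ℤ → ℚ) hk3
      push_cast
      field_simp
      linarith [this]
  have hNne : ((p:ℤ)) ≠ 0 := by exact_mod_cast hp.ne_zero
  obtain ⟨dA, dB⟩ := key_div hli hlat (p:ℤ) A B hNne (by exact_mod_cast hint)
  have hAz : a = 0 := (ZMod.val_eq_zero a).mp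
    (Nat.eq_zero_of_dvd_of_lt (by rw [hA] at dA; exact_mod_cast dA) (ZMod.val_lt a))
  have hBz : b = 0 := (ZMod.val_eq_zero b).mp
    (Nat.eq_zero_of_dvd_of_lt (by rw [hB] at dB; exact_mod_cast dB) (ZMod.val_lt b))
  rcases hab with h | h
  · exact h hAz
  · exact h hBz

lemma dvd_of_inv_smul_int (N : ℤ) (hN : (N:ℚ) ≠ 0) (x : ℍ[ℚ]) (c0 c1 c2 c3 : ℤ)
    (h0 : x.re = (c0:ℚ)) (h1 : x.imI = (c1:ℚ)) (h2 : x.imJ = (c2:ℚ)) (h3 : x.imK = (c3:ℚ))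
    (h : IsIntegerQuat (((N:ℤ):ℚ)⁻¹ • x)) : N ∣ c0 ∧ N ∣ c1 ∧ N ∣ c2 ∧ N ∣ c3 := by
  obtain ⟨b0, b1, b2, b3, r0, r1, r2, r3⟩ := h
  simp only [Quaternion.re_smul, Quaternion.imI_smul, Quaternion.imJ_smul,
    Quaternion.imK_smul, smul_eq_mul, h0, h1, h2, h3] at r0 r1 r2 r3
  refine ⟨⟨b0, ?_⟩, ⟨b1, ?_⟩, ⟨b2, ?_⟩, ⟨b3, ?_⟩⟩
  · have : (c0:ℚ) = N * b0 := by field_simp at r0; linarith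
    exact_mod_cast this
  · have : (c1:ℚ) = N * b1 := by field_simp at r1; linarith
    exact_mod_cast this
  · have : (c2:ℚ) = N * b2 := by field_simp at r2; linarith
    exact_mod_cast this
  · have : (c3:ℚ) = N * b3 := by field_simp at r3; linarith
    exact_mod_cast this

/-- If `(v₁, v₂)` is a `ℤ`-basis of the lattice `(ℚv₁ + ℚv₂) ∩ ℤ⁴`, then the
associated points `a₁ = Im(v₁ conj v₂)` and `a₂ = Im(conj v₂ * v₁)` lie in `ℤ⁴`, are congruent
mod 2 coordinatewise, and form a pair-primitive pair. -/
theorem stmt_8 (v₁ v₂ : ℍ[ℚ])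
    (hbasis : IsZBasisQuat (Submodule.span ℚ ({v₁, v₂} : Set ℍ[ℚ])) v₁ v₂) :
    IsIntegerQuat ((v₁ * star v₂).im) ∧ IsIntegerQuat ((star v₂ * v₁).im) ∧
      IsIntegerQuat ((2 : ℚ)⁻¹ • ((v₁ * star v₂).im - (star v₂ * v₁).im)) ∧
      PairPrimitive ((v₁ * star v₂).im) ((star v₂ * v₁).im) := by
  obtain ⟨hm1, hm2, ⟨p0, p1, p2, p3, e0, e1, e2, e3⟩, ⟨q0, q1, q2, q3, f0, f1, f2, f3⟩,
    hli, hlat⟩ := hbasis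
  have A0 : (v₁ * star v₂).im.re = ((0:ℤ):ℚ) := by simp
  have B0 : (star v₂ * v₁).im.re = ((0:ℤ):ℚ) := by simp
  have A1 : (v₁ * star v₂).im.imI = (((q0*p1 - p0*q1) - (p2*q3 - p3*q2) : ℤ) : ℚ) := by
    simp [Quaternion.imI_mul, e0, e1, e2, e3, f0, f1, f2, f3]; ring
  have A2 : (v₁ * star v₂).im.imJ = (((q0*p2 - p0*q2) - (p3*q1 - p1*q3) : ℤ) : ℚ) := by
    simp [Quaternion.imJ_mul, e0, e1, e2, e3, f0, f1, f2, f3]; ring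
  have A3 : (v₁ * star v₂).im.imK = (((q0*p3 - p0*q3) - (p1*q2 - p2*q1) : ℤ) : ℚ) := by
    simp [Quaternion.imK_mul, e0, e1, e2, e3, f0, f1, f2, f3]; ring
  have B1 : (star v₂ * v₁).im.imI = (((q0*p1 - p0*q1) + (p2*q3 - p3*q2) : ℤ) : ℚ) := by
    simp [Quaternion.imI_mul, e0, e1, e2, e3, f0, f1, f2, f3]; ring
  have B2 : (star v₂ * v₁).im.imJ = (((q0*p2 - p0*q2) + (p3*q1 - p1*q3) : ℤ) : ℚ) := by
    simp [Quaternion.imJ_mul, e0, e1, e2, e3, f0, f1, f2, f3]; ring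
  have B3 : (star v₂ * v₁).im.imK = (((q0*p3 - p0*q3) + (p1*q2 - p2*q1) : ℤ) : ℚ) := by
    simp [Quaternion.imK_mul, e0, e1, e2, e3, f0, f1, f2, f3]; ring
  refine ⟨⟨_, _, _, _, A0, A1, A2, A3⟩, ⟨_, _, _, _, B0, B1, B2, B3⟩, ?_, ?_, ?_⟩
  · -- half of the difference is integral
    refine ⟨0, -(p2*q3 - p3*q2), -(p3*q1 - p1*q3), -(p1*q2 - p2*q1), ?_, ?_, ?_, ?_⟩
    · simp only [Quaternion.re_smul, Quaternion.re_sub, A0, B0, smul_eq_mul]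
      push_cast; ring
    · simp only [Quaternion.imI_smul, Quaternion.imI_sub, A1, B1, smul_eq_mul]
      push_cast; ring
    · simp only [Quaternion.imJ_smul, Quaternion.imJ_sub, A2, B2, smul_eq_mul]
      push_cast; ring
    · simp only [Quaternion.imK_smul, Quaternion.imK_sub, A3, B3, smul_eq_mul]
      push_cast; ring
  · -- odd primes
    rintro p hp hp2 ⟨hi1, hi2⟩
    haveI : Fact p.Prime := ⟨hp⟩
    have hpQ : ((p:ℤ):ℚ) ≠ 0 := by
      have := hp.ne_zero; push_cast; exact_mod_cast this
    have hcast : (((p:ℤ)):ℚ) = (p:ℚ) := by push_cast; ring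
    obtain ⟨-, d11, d12, d13⟩ :=
      dvd_of_inv_smul_int (p:ℤ) hpQ _ 0 _ _ _ A0 A1 A2 A3 (by rw [hcast]; exact hi1)
    obtain ⟨-, d21, d22, d23⟩ :=
      dvd_of_inv_smul_int (p:ℤ) hpQ _ 0 _ _ _ B0 B1 B2 B3 (by rw [hcast]; exact hi2)
    have two_ne : (2 : ZMod p) ≠ 0 := by
      intro h
      have h2 : ((2:ℕ) : ZMod p) = 0 := by exact_mod_cast h
      have := (ZMod.natCast_eq_zero_iff 2 p).mp h2
      exact hp2 ((Nat.prime_dvd_prime_iff_eq hp Nat.prime_two).mp this)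
    have split : ∀ s c : ℤ, (p:ℤ) ∣ (s - c) → (p:ℤ) ∣ (s + c) →
        ((s : ZMod p) = 0 ∧ (c : ZMod p) = 0) := by
      intro s c hs hc
      have z1 : ((s - c : ℤ) : ZMod p) = 0 := by
        rw [ZMod.intCast_zmod_eq_zero_iff_dvd]; exact_mod_cast hs
      have z2 : ((s + c : ℤ) : ZMod p) = 0 := by
        rw [ZMod.intCast_zmod_eq_zero_iff_dvd]; exact_mod_cast hc
      push_cast at z1 z2
      constructor
      · have h2s : (2 : ZMod p) * (s : ZMod p) = 0 := by linear_combination z1 + z2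
        exact (mul_eq_zero.mp h2s).resolve_left two_ne
      · have h2c : (2 : ZMod p) * (c : ZMod p) = 0 := by linear_combination z2 - z1
        exact (mul_eq_zero.mp h2c).resolve_left two_ne
    obtain ⟨zS1, zC1⟩ := split _ _ d11 d21
    obtain ⟨zS2, zC2⟩ := split _ _ d12 d22
    obtain ⟨zS3, zC3⟩ := split _ _ d13 d23
    push_cast at zS1 zS2 zS3 zC1 zC2 zC3
    obtain ⟨a, b, hab, g0, g1, g2, g3⟩ :=
      core_dep ((p0:ℤ) : ZMod p) (p1:ℤ) (p2:ℤ) (p3:ℤ) (q0:ℤ) (q1:ℤ) (q2:ℤ) (q3:ℤ)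
        (by linear_combination zS1) (by linear_combination zS2) (by linear_combination zS3)
        (by linear_combination zC1) (by linear_combination zC2) (by linear_combination zC3)
    exact no_dep hli hlat p0 p1 p2 p3 q0 q1 q2 q3 e0 e1 e2 e3 f0 f1 f2 f3 p hp a b hab
      g0 g1 g2 g3
  · -- the 4-condition
    rintro ⟨hi1, hi2⟩
    have P0 : ((v₁ * star v₂).im + (star v₂ * v₁).im).re = ((0:ℤ):ℚ) := by
      simp only [Quaternion.re_add, A0, B0]; push_cast; ring
    have P1 : ((v₁ * star v₂).im + (star v₂ * v₁).im).imI = ((2*(q0*p1 - p0*q1) : ℤ):ℚ) := by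
      simp only [Quaternion.imI_add, A1, B1]; push_cast; ring
    have P2 : ((v₁ * star v₂).im + (star v₂ * v₁).im).imJ = ((2*(q0*p2 - p0*q2) : ℤ):ℚ) := by
      simp only [Quaternion.imJ_add, A2, B2]; push_cast; ring
    have P3 : ((v₁ * star v₂).im + (star v₂ * v₁).im).imK = ((2*(q0*p3 - p0*q3) : ℤ):ℚ) := by
      simp only [Quaternion.imK_add, A3, B3]; push_cast; ring
    have M0 : ((v₁ * star v₂).im - (star v₂ * v₁).im).re = ((0:ℤ):ℚ) := by
      simp only [Quaternion.re_sub, A0, B0]; push_cast; ring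
    have M1 : ((v₁ * star v₂).im - (star v₂ * v₁).im).imI = ((-2*(p2*q3 - p3*q2) : ℤ):ℚ) := by
      simp only [Quaternion.imI_sub, A1, B1]; push_cast; ring
    have M2 : ((v₁ * star v₂).im - (star v₂ * v₁).im).imJ = ((-2*(p3*q1 - p1*q3) : ℤ):ℚ) := by
      simp only [Quaternion.imJ_sub, A2, B2]; push_cast; ring
    have M3 : ((v₁ * star v₂).im - (star v₂ * v₁).im).imK = ((-2*(p1*q2 - p2*q1) : ℤ):ℚ) := by
      simp only [Quaternion.imK_sub, A3, B3]; push_cast; ring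
    have h4 : ((4:ℤ):ℚ) ≠ 0 := by norm_num
    have hcast4 : (((4:ℤ)):ℚ) = (4:ℚ) := by norm_num
    obtain ⟨-, d11, d12, d13⟩ :=
      dvd_of_inv_smul_int 4 h4 _ 0 _ _ _ P0 P1 P2 P3 (by rw [hcast4]; exact hi1)
    obtain ⟨-, d21, d22, d23⟩ :=
      dvd_of_inv_smul_int 4 h4 _ 0 _ _ _ M0 M1 M2 M3 (by rw [hcast4]; exact hi2)
    have toz : ∀ s : ℤ, (4:ℤ) ∣ 2*s → ((s : ZMod 2) = 0) := by
      intro s hs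
      rw [ZMod.intCast_zmod_eq_zero_iff_dvd]
      omega
    have toz' : ∀ s : ℤ, (4:ℤ) ∣ -2*s → ((s : ZMod 2) = 0) := by
      intro s hs
      rw [ZMod.intCast_zmod_eq_zero_iff_dvd]
      omega
    have zS1 := toz _ d11
    have zS2 := toz _ d12
    have zS3 := toz _ d13
    have zC1 := toz' _ d21
    have zC2 := toz' _ d22
    have zC3 := toz' _ d23
    push_cast at zS1 zS2 zS3 zC1 zC2 zC3
    obtain ⟨a, b, hab, g0, g1, g2, g3⟩ :=
      core_dep ((p0:ℤ) : ZMod 2) (p1:ℤ) (p2:ℤ) (p3:ℤ) (q0:ℤ) (q1:ℤ) (q2:ℤ) (q3:ℤ)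
        (by linear_combination zS1) (by linear_combination zS2) (by linear_combination zS3)
        (by linear_combination zC1) (by linear_combination zC2) (by linear_combination zC3)
    exact no_dep hli hlat p0 p1 p2 p3 q0 q1 q2 q3 e0 e1 e2 e3 f0 f1 f2 f3 2 Nat.prime_two
      a b hab g0 g1 g2 g3
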